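/- Let v_1,...,v_ℓ have nonnegative integer weights w_1,...,w_ℓ with each w_j ≤ α and Σ w_j = rα. Define the rounded weights w'_j = α if j ∈ {q_1,...,q_r} and w'_j = 0 otherwise, where q_m is the minimal index with Σ_{j≤q_m} w_j ≥ mα. Then for every prefix index p, |Σ_{j≤p} w'_j − Σ_{j≤p} w_j| ≤ α. -/

import Mathlib

open Finset

/-- Round weights `w_1, …, w_ℓ` (each `≤ α`, summing to `r·α`) to `w'` putting mass `α`
exactly at the quantile positions `q_1, …, q_r` and `0` elsewhere, where `q_m` is the
minimal index with prefix sum `≥ m·α`. Then every prefix sum changes by at most `α`. -/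
theorem rounding_prefix_error
    (ℓ α r : ℕ) (hℓ : 1 ≤ ℓ) (hα : 0 < α) (hr : 0 < r)
    (w : ℕ → ℕ) (hw : ∀ j, 1 ≤ j → j ≤ ℓ → w j ≤ α)
    (htot : ∑ j ∈ Finset.Icc 1 ℓ, w j = r * α)
    (q : ℕ → ℕ)
    (hq : ∀ m, 1 ≤ m → m ≤ r →
      m * α ≤ ∑ j ∈ Finset.Icc 1 (q m), w j ∧
      ∀ q' < q m, ∑ j ∈ Finset.Icc 1 q', w j < m * α)
    (w' : ℕ → ℕ)
    (hw' : ∀ j, (w' j = α ∧ ∃ m, 1 ≤ m ∧ m ≤ r ∧ q m = j) ∨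
                (w' j = 0 ∧ ¬ ∃ m, 1 ≤ m ∧ m ≤ r ∧ q m = j)) :
    ∀ p, p ≤ ℓ →
      |(∑ j ∈ Finset.Icc 1 p, w' j : ℤ) - (∑ j ∈ Finset.Icc 1 p, w j : ℤ)| ≤ (α : ℤ) := by
  intro p hp
  set S : ℕ → ℕ := fun n => ∑ j ∈ Finset.Icc 1 n, w j with hS
  -- monotonicity
  have hSmono : ∀ a b : ℕ, a ≤ b → S a ≤ S b := by
    intro a b hab
    exact Finset.sum_le_sum_of_subset (Finset.Icc_subset_Icc_right hab)
  have hqpos : ∀ m, 1 ≤ m → m ≤ r → 1 ≤ q m := by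
    intro m h1 h2
    by_contra h
    have hq0 : q m = 0 := by omega
    have := (hq m h1 h2).1
    rw [hq0] at this
    simp at this
    omega
  have hqle : ∀ m, 1 ≤ m → m ≤ r → q m ≤ ℓ := by
    intro m h1 h2
    by_contra h
    have := (hq m h1 h2).2 ℓ (by omega)
    have : r * α < m * α := lt_of_eq_of_lt htot.symm this
    nlinarith
  -- splitting the prefix sum at q m
  have hsplit : ∀ m, 1 ≤ m → m ≤ r → S (q m) = S (q m - 1) + w (q m) := by
    intro m h1 h2
    have h := hqpos m h1 h2
    have e : q m = (q m - 1) + 1 := by omega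
    simp only [hS]
    rw [e, Finset.sum_Icc_succ_top (Nat.le_add_left 1 _) w, Nat.add_sub_cancel]
  -- injectivity of q on [1, r]
  have hqinj : ∀ m m', 1 ≤ m → m ≤ r → 1 ≤ m' → m' ≤ r → q m = q m' → m = m' := by
    have key : ∀ m m', 1 ≤ m → m ≤ r → 1 ≤ m' → m' ≤ r → m < m' → q m ≠ q m' := by
      intro m m' h1 h2 h1' h2' hlt heq
      have hj1 : 1 ≤ q m := hqpos m h1 h2
      have hjl : q m ≤ ℓ := hqle m h1 h2
      have hwj : w (q m) ≤ α := hw _ hj1 hjl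
      have hprev : S (q m - 1) < m * α := (hq m h1 h2).2 _ (by omega)
      have hbig : m' * α ≤ S (q m) := heq ▸ (hq m' h1' h2').1
      have hsp := hsplit m h1 h2
      nlinarith
    intro m m' h1 h2 h1' h2' heq
    rcases lt_trichotomy m m' with h | h | h
    · exact absurd heq (key m m' h1 h2 h1' h2' h)
    · exact h
    · exact absurd heq.symm (key m' m h1' h2' h1 h2 h)
  -- the set of quantiles landing in [1, p]
  set T : Finset ℕ := (Finset.Icc 1 r).filter (fun m => q m ≤ p) with hT
  -- w' prefix sum equals α * |T|
  have hS' : ∑ j ∈ Finset.Icc 1 p, w' j = α * T.card := by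
    have himg : T.image q ⊆ Finset.Icc 1 p := by
      intro j hj
      obtain ⟨m, hm, rfl⟩ := Finset.mem_image.mp hj
      rw [hT, Finset.mem_filter, Finset.mem_Icc] at hm
      exact Finset.mem_Icc.mpr ⟨hqpos m hm.1.1 hm.1.2, hm.2⟩
    have hzero : ∀ j ∈ Finset.Icc 1 p, j ∉ T.image q → w' j = 0 := by
      intro j hj hnot
      rcases hw' j with ⟨hwa, m, h1, h2, hqm⟩ | ⟨h0, _⟩
      · exfalso
        apply hnot
        apply Finset.mem_image.mpr
        refine ⟨m, ?_, hqm⟩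
        rw [hT, Finset.mem_filter, Finset.mem_Icc]
        rw [Finset.mem_Icc] at hj
        exact ⟨⟨h1, h2⟩, hqm ▸ hj.2⟩
      · exact h0
    rw [← Finset.sum_subset himg hzero]
    rw [Finset.sum_image (fun m hm m' hm' heq => by
      rw [hT, Finset.mem_coe, Finset.mem_filter, Finset.mem_Icc] at hm hm'
      exact hqinj m m' hm.1.1 hm.1.2 hm'.1.1 hm'.1.2 heq)]
    have : ∀ m ∈ T, w' (q m) = α := by
      intro m hm
      rw [hT, Finset.mem_filter, Finset.mem_Icc] at hm
      rcases hw' (q m) with ⟨hwa, _⟩ | ⟨_, hno⟩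
      · exact hwa
      · exact absurd ⟨m, hm.1.1, hm.1.2, rfl⟩ hno
    rw [Finset.sum_congr rfl this, Finset.sum_const, smul_eq_mul, mul_comm]
  -- bound 1 : α * |T| ≤ S p
  have hub : α * T.card ≤ S p := by
    rcases Finset.eq_empty_or_nonempty T with h | h
    · simp [h]
    · set m0 := T.max' h with hm0
      have hm0T : m0 ∈ T := T.max'_mem h
      have hm0' := hm0T
      rw [hT, Finset.mem_filter, Finset.mem_Icc] at hm0'
      have hcard : T.card ≤ m0 := by
        have : T ⊆ Finset.Icc 1 m0 := by
          intro m hm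
          have hle := T.le_max' m hm
          rw [hT, Finset.mem_filter, Finset.mem_Icc] at hm
          exact Finset.mem_Icc.mpr ⟨hm.1.1, hle⟩
        calc T.card ≤ (Finset.Icc 1 m0).card := Finset.card_le_card this
          _ = m0 := by rw [Nat.card_Icc]; omega
      calc α * T.card ≤ α * m0 := Nat.mul_le_mul_left α hcard
        _ = m0 * α := mul_comm _ _
        _ ≤ S (q m0) := (hq m0 hm0'.1.1 hm0'.1.2).1
        _ ≤ S p := hSmono _ _ hm0'.2
  -- bound 2 : S p ≤ α * |T| + α
  have hlb : S p ≤ α * T.card + α := by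
    by_cases hk : T.card = r
    · have : S p ≤ r * α := htot ▸ hSmono p ℓ hp
      calc S p ≤ r * α := this
        _ = α * T.card := by rw [hk, mul_comm]
        _ ≤ α * T.card + α := Nat.le_add_right _ _
    · have hkr : T.card < r := by
        have : T.card ≤ r := by
          calc T.card ≤ (Finset.Icc 1 r).card := Finset.card_le_card (Finset.filter_subset _ _)
            _ = r := by rw [Nat.card_Icc]; omega
        omega
      have hnsub : ¬ (Finset.Icc 1 (T.card + 1) ⊆ T) := by
        intro hsub
        have := Finset.card_le_card hsub
        rw [Nat.card_Icc] at this
        omega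
      obtain ⟨m, hmI, hmT⟩ := Finset.not_subset.mp hnsub
      rw [Finset.mem_Icc] at hmI
      have hmr : m ≤ r := by omega
      have hqmp : p < q m := by
        by_contra hc
        exact hmT (by rw [hT, Finset.mem_filter, Finset.mem_Icc]; exact ⟨⟨hmI.1, hmr⟩, by omega⟩)
      have hSp : S p < m * α := (hq m hmI.1 hmr).2 p hqmp
      calc S p ≤ m * α := le_of_lt hSp
        _ ≤ (T.card + 1) * α := Nat.mul_le_mul_right α hmI.2
        _ = α * T.card + α := by ring
  -- conclude
  obtain ⟨a, ha⟩ : ∃ a, α * T.card = a := ⟨_, rfl⟩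
  rw [ha] at hS' hub hlb
  have e1 : (∑ j ∈ Finset.Icc 1 p, (w' j : ℤ)) = (a : ℤ) := by exact_mod_cast hS'
  have e2 : (∑ j ∈ Finset.Icc 1 p, (w j : ℤ)) = ((S p : ℕ) : ℤ) := by exact_mod_cast rfl
  rw [e1, e2, abs_le]
  constructor <;> omega
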